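/- For all positive integers r and every real x ≥ 1, |Σ_{n ≤ x} c*(n,r) − δ_{r,1} x| ≤ σ*(r), where σ*(r) = Σ_{d | r, gcd(d, r/d) = 1} d is the sum of the unitary divisors of r and δ_{r,1} = 1 if r = 1 and 0 otherwise. In particular, the mean value M(c*(·,r)) exists and equals δ_{r,1}. -/

import Mathlib

open Finset Filter Topology

/-- The unitary gcd `(n,r)_U`: the largest `d` with `d ∣ n`, `d ∣ r` and `gcd(d, r/d) = 1`. -/
def unitaryGcd (n r : ℕ) : ℕ :=
  (r.divisors.filter (fun d => d ∣ n ∧ Nat.Coprime d (r / d))).sup id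

/-- The unitary Ramanujan sum `c*(n,r) = ∑_{1 ≤ k ≤ r, (k,r)_U = 1} exp(2πikn/r)`. -/
noncomputable def unitaryRamanujanSum (n r : ℕ) : ℂ :=
  ∑ k ∈ (Finset.Icc 1 r).filter (fun k => unitaryGcd k r = 1),
    Complex.exp (2 * Real.pi * Complex.I * k * n / r)

namespace URS

noncomputable def mu (d : ℕ) : ℂ := (-1) ^ d.primeFactors.card

def U (r : ℕ) : Finset ℕ := r.divisors.filter (fun d => Nat.Coprime d (r / d))

lemma mem_U {r d : ℕ} (hr : r ≠ 0) :
    d ∈ U r ↔ d ∣ r ∧ Nat.Coprime d (r / d) := by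
  simp [U, Nat.mem_divisors, hr, and_assoc]

lemma ne_zero_of_mem_U {r d : ℕ} (hr : r ≠ 0) (h : d ∈ U r) : d ≠ 0 := by
  rcases (mem_U hr).1 h with ⟨hd, -⟩
  rintro rfl; exact hr (Nat.eq_zero_of_zero_dvd hd)

/-- p-adic characterization of unitary divisors, forward direction -/
lemma factorization_eq {r d : ℕ} (hr : r ≠ 0) (hd : d ∣ r) (hco : Nat.Coprime d (r / d))
    (p : ℕ) : d.factorization p = 0 ∨ d.factorization p = r.factorization p := by
  have hd0 : d ≠ 0 := fun h => hr (Nat.eq_zero_of_zero_dvd (h ▸ hd))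
  by_cases hp : p.Prime
  · by_cases h0 : d.factorization p = 0
    · exact Or.inl h0
    · right
      have hle : d.factorization p ≤ r.factorization p :=
        (Nat.factorization_le_iff_dvd hd0 hr).2 hd p
      rcases lt_or_eq_of_le hle with hlt | heq
      · exfalso
        have hpd : p ∣ d := by
          have := Nat.Prime.pow_dvd_iff_le_factorization (k := 1) hp hd0
          simpa [pow_one] using this.2 (Nat.one_le_iff_ne_zero.2 h0)
        have hrd0 : r / d ≠ 0 := by
          have := Nat.div_pos (Nat.le_of_dvd (Nat.pos_of_ne_zero hr) hd) (Nat.pos_of_ne_zero hd0)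
          omega
        have hpd' : p ∣ r / d := by
          have h1 : 1 ≤ (r / d).factorization p := by
            rw [Nat.factorization_div hd]
            simp only [Finsupp.tsub_apply]
            omega
          have := Nat.Prime.pow_dvd_iff_le_factorization (k := 1) hp hrd0
          simpa [pow_one] using this.2 h1
        have : p ∣ 1 := hco ▸ Nat.dvd_gcd hpd hpd'
        exact hp.one_lt.ne' (Nat.dvd_one.1 this)
      · exact heq
  · left; exact Nat.factorization_eq_zero_of_not_prime d hp

/-- p-adic characterization, converse -/
lemma coprime_of_factorization {r d : ℕ} (hr : r ≠ 0) (hd : d ∣ r)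
    (h : ∀ p, d.factorization p = 0 ∨ d.factorization p = r.factorization p) :
    Nat.Coprime d (r / d) := by
  have hd0 : d ≠ 0 := fun h0 => hr (Nat.eq_zero_of_zero_dvd (h0 ▸ hd))
  have hrd0 : r / d ≠ 0 := by
    have := Nat.div_pos (Nat.le_of_dvd (Nat.pos_of_ne_zero hr) hd) (Nat.pos_of_ne_zero hd0)
    omega
  rw [Nat.coprime_iff_gcd_eq_one]
  by_contra hne
  obtain ⟨p, hp, hpd, hpr⟩ := Nat.Prime.not_coprime_iff_dvd.1 hne
  have h1 : 1 ≤ d.factorization p := by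
    have := Nat.Prime.pow_dvd_iff_le_factorization (k := 1) hp hd0
    simpa [pow_one] using this.1 (by simpa [pow_one] using hpd)
  have h2 : 1 ≤ (r / d).factorization p := by
    have := Nat.Prime.pow_dvd_iff_le_factorization (k := 1) hp hrd0
    simpa [pow_one] using this.1 (by simpa [pow_one] using hpr)
  rw [Nat.factorization_div hd] at h2
  simp only [Finsupp.tsub_apply] at h2
  rcases h p with h0 | h0 <;> omega

def Phi (r : ℕ) (S : Finset ℕ) : ℕ := ∏ p ∈ S, p ^ r.factorization p

lemma Phi_ne_zero {r : ℕ} {S : Finset ℕ} (hS : S ⊆ r.primeFactors) : Phi r S ≠ 0 :=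
  Finset.prod_ne_zero_iff.2 fun p hp =>
    pow_ne_zero _ (Nat.pos_of_mem_primeFactors (hS hp)).ne'

lemma Phi_factorization {r : ℕ} {S : Finset ℕ} (hS : S ⊆ r.primeFactors) (q : ℕ) :
    (Phi r S).factorization q = if q ∈ S then r.factorization q else 0 := by
  rw [Phi, Nat.factorization_prod
    (fun p hp => pow_ne_zero _ (Nat.pos_of_mem_primeFactors (hS hp)).ne')]
  rw [Finset.sum_apply']
  rw [Finset.sum_congr rfl (fun p hp => by
    rw [Nat.Prime.factorization_pow (Nat.prime_of_mem_primeFactors (hS hp))])]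
  simp only [Finsupp.single_apply]
  rw [Finset.sum_ite_eq' S q (fun x => r.factorization x)]

lemma Phi_dvd {r : ℕ} {S : Finset ℕ} (hS : S ⊆ r.primeFactors) {k : ℕ} (hk : k ≠ 0)
    (h : ∀ p ∈ S, p ^ r.factorization p ∣ k) : Phi r S ∣ k := by
  rw [← Nat.factorization_le_iff_dvd (Phi_ne_zero hS) hk, Finsupp.le_def]
  intro q
  rw [Phi_factorization hS]
  split_ifs with hq
  · exact (Nat.Prime.pow_dvd_iff_le_factorization
      (Nat.prime_of_mem_primeFactors (hS hq)) hk).1 (h q hq)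
  · exact Nat.zero_le _

lemma Phi_mem_U {r : ℕ} {S : Finset ℕ} (hr : r ≠ 0) (hS : S ⊆ r.primeFactors) :
    Phi r S ∈ U r := by
  have hdvd : Phi r S ∣ r := Phi_dvd hS hr (fun p _ => Nat.ordProj_dvd r p)
  refine (mem_U hr).2 ⟨hdvd, coprime_of_factorization hr hdvd (fun p => ?_)⟩
  rw [Phi_factorization hS]
  split_ifs <;> simp

lemma Phi_primeFactors {r : ℕ} {S : Finset ℕ} (hS : S ⊆ r.primeFactors) :
    (Phi r S).primeFactors = S := by
  ext q
  rw [← Nat.support_factorization, Finsupp.mem_support_iff, Phi_factorization hS]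
  constructor
  · intro h; by_contra hq; simp [hq] at h
  · intro hq
    simp only [hq, if_true]
    rw [← Finsupp.mem_support_iff, Nat.support_factorization]
    exact hS hq

lemma Phi_of_mem_U {r d : ℕ} (hr : r ≠ 0) (hd : d ∈ U r) :
    Phi r d.primeFactors = d := by
  have hd0 : d ≠ 0 := ne_zero_of_mem_U hr hd
  rcases (mem_U hr).1 hd with ⟨hdvd, hco⟩
  conv_rhs => rw [← Nat.factorization_prod_pow_eq_self hd0]
  rw [Finsupp.prod, Nat.support_factorization, Phi]
  refine Finset.prod_congr rfl (fun p hp => ?_)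
  rcases factorization_eq hr hdvd hco p with h0 | h0
  · exfalso
    rw [← Nat.support_factorization, Finsupp.mem_support_iff] at hp
    exact hp h0
  · rw [h0]

/-- bijection between unitary divisors of `r` dividing `k` and subsets of
    the set of full prime powers of `r` dividing `k` -/
lemma sum_U_filter {r k : ℕ} (hr : r ≠ 0) (hk : k ≠ 0) (f : ℕ → ℂ) :
    ∑ d ∈ (U r).filter (· ∣ k), f d =
      ∑ S ∈ (r.primeFactors.filter (fun p => p ^ r.factorization p ∣ k)).powerset,
        f (Phi r S) := by
  refine Finset.sum_nbij' (fun d => d.primeFactors) (fun S => Phi r S) ?_ ?_ ?_ ?_ ?_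
  · intro d hd
    rw [Finset.mem_filter] at hd
    obtain ⟨hdU, hdk⟩ := hd
    have hd0 : d ≠ 0 := ne_zero_of_mem_U hr hdU
    rcases (mem_U hr).1 hdU with ⟨hdvd, hco⟩
    rw [Finset.mem_powerset]
    intro p hp
    replace hp : p ∈ d.primeFactors := hp
    have hpr : p ∈ r.primeFactors := Nat.primeFactors_mono hdvd hr hp
    rw [Finset.mem_filter]
    refine ⟨hpr, ?_⟩
    have hvp : d.factorization p = r.factorization p := by
      rcases factorization_eq hr hdvd hco p with h0 | h0
      · exfalso
        rw [← Nat.support_factorization, Finsupp.mem_support_iff] at hp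
        exact hp h0
      · exact h0
    calc p ^ r.factorization p = p ^ d.factorization p := by rw [hvp]
    _ ∣ d := Nat.ordProj_dvd d p
    _ ∣ k := hdk
  · intro S hS
    rw [Finset.mem_powerset] at hS
    have hS' : S ⊆ r.primeFactors := hS.trans (Finset.filter_subset _ _)
    rw [Finset.mem_filter]
    exact ⟨Phi_mem_U hr hS', Phi_dvd hS' hk (fun p hp =>
      (Finset.mem_filter.1 (hS hp)).2)⟩
  · intro d hd
    exact Phi_of_mem_U hr (Finset.mem_filter.1 hd).1
  · intro S hS
    rw [Finset.mem_powerset] at hS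
    exact Phi_primeFactors (hS.trans (Finset.filter_subset _ _))
  · intro d hd
    have h := Phi_of_mem_U hr (Finset.mem_filter.1 hd).1
    show f d = f (Phi r d.primeFactors)
    rw [h]

lemma sum_U {r : ℕ} (hr : r ≠ 0) (f : ℕ → ℂ) :
    ∑ d ∈ U r, f d = ∑ S ∈ r.primeFactors.powerset, f (Phi r S) := by
  have h1 : (U r).filter (· ∣ r) = U r := by
    apply Finset.filter_true_of_mem
    intro d hd; exact ((mem_U hr).1 hd).1
  have h2 : r.primeFactors.filter (fun p => p ^ r.factorization p ∣ r) = r.primeFactors := by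
    apply Finset.filter_true_of_mem
    intro p _; exact Nat.ordProj_dvd r p
  rw [← h1, sum_U_filter hr hr f, h2]

lemma mu_Phi {r : ℕ} {S : Finset ℕ} (hS : S ⊆ r.primeFactors) :
    mu (Phi r S) = (-1 : ℂ) ^ S.card := by
  rw [mu, Phi_primeFactors hS]

lemma sum_mu {r : ℕ} (hr : r ≠ 0) :
    ∑ d ∈ U r, mu d = if r = 1 then 1 else 0 := by
  rw [sum_U hr]
  rw [Finset.sum_congr rfl (fun S hS => mu_Phi (Finset.mem_powerset.1 hS))]
  have := Finset.sum_powerset_neg_one_pow_card (x := r.primeFactors)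
  have h2 : (∑ S ∈ r.primeFactors.powerset, (-1 : ℂ) ^ S.card)
      = ((∑ S ∈ r.primeFactors.powerset, (-1 : ℤ) ^ S.card : ℤ) : ℂ) := by
    push_cast; rfl
  rw [h2, this]
  have : r.primeFactors = ∅ ↔ r = 1 := by
    rw [Nat.primeFactors_eq_empty]; omega
  split_ifs with h h' h' <;> simp_all

lemma unitaryGcd_eq_one_iff {k r : ℕ} (hr : r ≠ 0) (hk : k ≠ 0) :
    unitaryGcd k r = 1 ↔
      r.primeFactors.filter (fun p => p ^ r.factorization p ∣ k) = ∅ := by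
  set T := r.divisors.filter (fun d => d ∣ k ∧ Nat.Coprime d (r / d)) with hT
  have h1T : (1 : ℕ) ∈ T := by
    rw [hT, Finset.mem_filter, Nat.mem_divisors]
    exact ⟨⟨one_dvd r, hr⟩, one_dvd k, Nat.coprime_one_left _⟩
  constructor
  · intro h
    by_contra hne
    obtain ⟨p, hp⟩ := Finset.nonempty_of_ne_empty hne
    rw [Finset.mem_filter] at hp
    obtain ⟨hpr, hpk⟩ := hp
    have hpprime := Nat.prime_of_mem_primeFactors hpr
    have hmem : p ^ r.factorization p ∈ T := by
      rw [hT, Finset.mem_filter, Nat.mem_divisors]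
      exact ⟨⟨Nat.ordProj_dvd r p, hr⟩, hpk,
        (Nat.coprime_ordCompl hpprime hr).pow_left _⟩
    have hle : p ^ r.factorization p ≤ unitaryGcd k r := Finset.le_sup (f := id) hmem
    have hvp : 1 ≤ r.factorization p := by
      rw [← Nat.support_factorization, Finsupp.mem_support_iff] at hpr
      omega
    have : 2 ≤ p ^ r.factorization p :=
      le_trans hpprime.two_le (Nat.le_self_pow (by omega) p)
    omega
  · intro hP
    refine le_antisymm ?_ (Finset.le_sup (f := id) h1T)
    apply Finset.sup_le
    intro d hd
    rw [Finset.mem_filter, Nat.mem_divisors] at hd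
    obtain ⟨⟨hdr, -⟩, hdk, hco⟩ := hd
    have hd0 : d ≠ 0 := fun h0 => hr (Nat.eq_zero_of_zero_dvd (h0 ▸ hdr))
    show d ≤ 1
    by_contra hlt
    obtain ⟨p, hpprime, hpd⟩ := Nat.exists_prime_and_dvd (fun h => hlt (le_of_eq h))
    have hvp : 1 ≤ d.factorization p := by
      have := Nat.Prime.pow_dvd_iff_le_factorization (k := 1) hpprime hd0
      simpa [pow_one] using this.1 (by simpa [pow_one] using hpd)
    have heq : d.factorization p = r.factorization p := by
      rcases factorization_eq hr hdr hco p with h0 | h0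
      · omega
      · exact h0
    have hpP : p ∈ r.primeFactors.filter (fun p => p ^ r.factorization p ∣ k) := by
      rw [Finset.mem_filter]
      refine ⟨Nat.primeFactors_mono hdr hr ?_, ?_⟩
      · rw [← Nat.support_factorization, Finsupp.mem_support_iff]; omega
      · calc p ^ r.factorization p = p ^ d.factorization p := by rw [heq]
        _ ∣ d := Nat.ordProj_dvd d p
        _ ∣ k := hdk
    rw [hP] at hpP
    exact absurd hpP (Finset.notMem_empty p)

lemma indicator_eq {k r : ℕ} (hr : r ≠ 0) (hk : k ≠ 0) :
    (if unitaryGcd k r = 1 then (1 : ℂ) else 0) =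
      ∑ d ∈ (U r).filter (· ∣ k), mu d := by
  rw [sum_U_filter hr hk]
  rw [Finset.sum_congr rfl (fun S hS => mu_Phi
    ((Finset.mem_powerset.1 hS).trans (Finset.filter_subset _ _)))]
  have h2 : (∑ S ∈ (r.primeFactors.filter (fun p => p ^ r.factorization p ∣ k)).powerset,
      (-1 : ℂ) ^ S.card)
      = ((∑ S ∈ (r.primeFactors.filter (fun p => p ^ r.factorization p ∣ k)).powerset,
      (-1 : ℤ) ^ S.card : ℤ) : ℂ) := by
    push_cast; rfl
  rw [h2, Finset.sum_powerset_neg_one_pow_card]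
  by_cases h : unitaryGcd k r = 1
  · rw [if_pos h, if_pos ((unitaryGcd_eq_one_iff hr hk).1 h)]; norm_num
  · rw [if_neg h, if_neg (fun he => h ((unitaryGcd_eq_one_iff hr hk).2 he))]; norm_num

lemma exp_sum (m n : ℕ) (hm : m ≠ 0) :
    ∑ j ∈ Finset.Icc 1 m, Complex.exp (2 * Real.pi * Complex.I * j * n / m) =
      if m ∣ n then (m : ℂ) else 0 := by
  have hm0 : (m : ℂ) ≠ 0 := Nat.cast_ne_zero.2 hm
  set ω : ℂ := Complex.exp (2 * Real.pi * Complex.I * n / m) with hω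
  have hterm : ∀ j : ℕ, Complex.exp (2 * Real.pi * Complex.I * j * n / m) = ω ^ j := by
    intro j
    rw [hω, ← Complex.exp_nat_mul]
    congr 1
    ring
  rw [Finset.sum_congr rfl (fun j _ => hterm j)]
  by_cases hdvd : m ∣ n
  · obtain ⟨c, rfl⟩ := hdvd
    have hω1 : ω = 1 := by
      rw [hω]
      have : 2 * (Real.pi : ℂ) * Complex.I * ((m * c : ℕ) : ℂ) / m = (c : ℤ) * (2 * Real.pi * Complex.I) := by
        push_cast
        field_simp
      rw [this, Complex.exp_int_mul_two_pi_mul_I]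
    simp [hω1, Nat.card_Icc, dvd_mul_right]
  · have hωm : ω ^ m = 1 := by
      rw [hω, ← Complex.exp_nat_mul]
      have : (m : ℂ) * (2 * Real.pi * Complex.I * n / m) = (n : ℤ) * (2 * Real.pi * Complex.I) := by
        push_cast
        field_simp
      rw [this, Complex.exp_int_mul_two_pi_mul_I]
    have hω1 : ω ≠ 1 := by
      intro h
      rw [hω, Complex.exp_eq_one_iff] at h
      obtain ⟨z, hz⟩ := h
      have hpi : (2 : ℂ) * Real.pi * Complex.I ≠ 0 := by
        simp [Complex.I_ne_zero, Real.pi_ne_zero, Complex.ofReal_ne_zero]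
      rw [div_eq_iff hm0] at hz
      have hpi : (2 : ℂ) * Real.pi * Complex.I ≠ 0 := by
        simp [Complex.I_ne_zero, Real.pi_ne_zero, Complex.ofReal_ne_zero]
      have hnz : (n : ℂ) = (z : ℂ) * m := by
        apply mul_left_cancel₀ hpi
        linear_combination hz
      have hint : (n : ℤ) = z * m := by exact_mod_cast hnz
      have : (m : ℤ) ∣ (n : ℤ) := Dvd.intro_left z hint.symm
      exact hdvd (Int.natCast_dvd_natCast.mp this)
    rw [if_neg hdvd]
    rw [show Finset.Icc 1 m = Finset.Ico 1 (m + 1) by rfl]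
    rw [Finset.sum_Ico_eq_sum_range]
    simp only [Nat.add_sub_cancel]
    rw [Finset.sum_congr rfl (fun i _ => by rw [pow_add, pow_one])]
    rw [← Finset.mul_sum, geom_sum_eq hω1, hωm]
    simp

lemma inner_sum (d r n : ℕ) (hr : r ≠ 0) (hdr : d ∣ r) :
    ∑ k ∈ (Finset.Icc 1 r).filter (fun k => d ∣ k),
        Complex.exp (2 * Real.pi * Complex.I * k * n / r) =
      if (r / d) ∣ n then ((r / d : ℕ) : ℂ) else 0 := by
  obtain ⟨m, rfl⟩ := hdr
  have hd0 : d ≠ 0 := by rintro rfl; simp at hr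
  have hm0 : m ≠ 0 := by rintro rfl; simp at hr
  have hrd : d * m / d = m := Nat.mul_div_cancel_left m (Nat.pos_of_ne_zero hd0)
  rw [hrd, ← exp_sum m n hm0]
  refine Finset.sum_nbij' (fun k => k / d) (fun j => d * j) ?_ ?_ ?_ ?_ ?_
  · intro k hk
    rw [Finset.mem_filter, Finset.mem_Icc] at hk
    obtain ⟨⟨h1, h2⟩, hdvd⟩ := hk
    rw [Finset.mem_Icc]
    constructor
    · exact Nat.one_le_div_iff (Nat.pos_of_ne_zero hd0) |>.2 (Nat.le_of_dvd (by omega) hdvd)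
    · exact Nat.div_le_div_right h2 |>.trans_eq hrd
  · intro j hj
    rw [Finset.mem_Icc] at hj
    rw [Finset.mem_filter, Finset.mem_Icc]
    refine ⟨⟨?_, ?_⟩, Dvd.intro j rfl⟩
    · have := Nat.pos_of_ne_zero hd0; nlinarith [hj.1]
    · exact Nat.mul_le_mul_left d hj.2
  · intro k hk
    rw [Finset.mem_filter] at hk
    exact Nat.mul_div_cancel' hk.2
  · intro j _
    exact Nat.mul_div_cancel_left j (Nat.pos_of_ne_zero hd0)
  · intro k hk
    rw [Finset.mem_filter] at hk
    obtain ⟨c, rfl⟩ := hk.2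
    congr 1
    show _ = 2 * (Real.pi:ℂ) * Complex.I * ((d * c / d : ℕ) : ℂ) * n / m
    rw [Nat.mul_div_cancel_left c (Nat.pos_of_ne_zero hd0)]
    have hdC : (d : ℂ) ≠ 0 := Nat.cast_ne_zero.2 hd0
    have hmC : (m : ℂ) ≠ 0 := Nat.cast_ne_zero.2 hm0
    push_cast
    field_simp

lemma crs_eq (n r : ℕ) (hr : r ≠ 0) (hn : n ≠ 0) :
    unitaryRamanujanSum n r =
      ∑ d ∈ U r, mu d * (if (r / d) ∣ n then ((r / d : ℕ) : ℂ) else 0) := by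
  rw [unitaryRamanujanSum, Finset.sum_filter]
  have step1 : ∀ k ∈ Finset.Icc 1 r,
      (if unitaryGcd k r = 1 then Complex.exp (2 * Real.pi * Complex.I * k * n / r) else 0) =
      ∑ d ∈ U r, (if d ∣ k then mu d else 0) * Complex.exp (2 * Real.pi * Complex.I * k * n / r) := by
    intro k hk
    rw [Finset.mem_Icc] at hk
    have hk0 : k ≠ 0 := by omega
    rw [← Finset.sum_mul, ← Finset.sum_filter, ← indicator_eq hr hk0]
    split_ifs <;> simp
  rw [Finset.sum_congr rfl step1, Finset.sum_comm]
  refine Finset.sum_congr rfl (fun d hd => ?_)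
  have hdr : d ∣ r := ((mem_U hr).1 hd).1
  rw [← inner_sum d r n hr hdr, Finset.sum_filter, Finset.mul_sum]
  refine Finset.sum_congr rfl (fun k _ => ?_)
  split_ifs <;> simp

lemma partial_sum_eq (r N : ℕ) (hr : r ≠ 0) :
    ∑ n ∈ Finset.Icc 1 N, unitaryRamanujanSum n r =
      ∑ d ∈ U r, mu d * ((r / d : ℕ) : ℂ) * ((N / (r / d) : ℕ) : ℂ) := by
  have : ∀ n ∈ Finset.Icc 1 N, unitaryRamanujanSum n r =
      ∑ d ∈ U r, mu d * (if (r / d) ∣ n then ((r / d : ℕ) : ℂ) else 0) := by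
    intro n hn
    rw [Finset.mem_Icc] at hn
    exact crs_eq n r hr (by omega)
  rw [Finset.sum_congr rfl this, Finset.sum_comm]
  refine Finset.sum_congr rfl (fun d hd => ?_)
  rw [← Finset.mul_sum, mul_assoc]
  congr 1
  have : ∑ n ∈ Finset.Icc 1 N, (if (r / d) ∣ n then ((r / d : ℕ) : ℂ) else 0) =
      ((r / d : ℕ) : ℂ) * ((Finset.Icc 1 N).filter (fun n => (r / d) ∣ n)).card := by
    rw [← Finset.sum_filter, Finset.sum_const, nsmul_eq_mul, mul_comm]
  rw [this]
  congr 1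
  have : Finset.Icc 1 N = Finset.Ioc 0 N := (Finset.Icc_add_one_left_eq_Ioc 0 N)
  rw [this]
  rw [Nat.Ioc_filter_dvd_card_eq_div]

lemma sum_U_div {r : ℕ} (hr : r ≠ 0) :
    ∑ d ∈ U r, ((r / d : ℕ) : ℝ) = ∑ d ∈ U r, (d : ℝ) := by
  refine Finset.sum_nbij' (fun d => r / d) (fun d => r / d) ?_ ?_ ?_ ?_ ?_
  · intro d hd
    rcases (mem_U hr).1 hd with ⟨hdr, hco⟩
    refine (mem_U hr).2 ⟨Nat.div_dvd_of_dvd hdr, ?_⟩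
    rw [Nat.div_div_self hdr hr]
    exact hco.symm
  · intro d hd
    rcases (mem_U hr).1 hd with ⟨hdr, hco⟩
    refine (mem_U hr).2 ⟨Nat.div_dvd_of_dvd hdr, ?_⟩
    rw [Nat.div_div_self hdr hr]
    exact hco.symm
  · intro d hd
    exact Nat.div_div_self ((mem_U hr).1 hd).1 hr
  · intro d hd
    exact Nat.div_div_self ((mem_U hr).1 hd).1 hr
  · intro d hd; rfl

end URS

open URS in
/-- For every `r ≥ 1` and `x ≥ 1`, `|∑_{n ≤ x} c*(n,r) − δ_{r,1} x| ≤ σ*(r)`, where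
`σ*(r)` is the sum of the unitary divisors of `r`; in particular the mean value of
`c*(·,r)` exists and equals `δ_{r,1}`. -/
theorem unitaryRamanujanSum_partial_sum (r : ℕ) (hr : 0 < r) :
    (∀ x : ℝ, 1 ≤ x →
      ‖(∑ n ∈ Finset.Icc 1 ⌊x⌋₊, unitaryRamanujanSum n r) -
          (if r = 1 then (1 : ℂ) else 0) * (x : ℂ)‖
        ≤ ((∑ d ∈ r.divisors.filter (fun d => Nat.Coprime d (r / d)), d : ℕ) : ℝ)) ∧
    Tendsto (fun x : ℝ => (∑ n ∈ Finset.Icc 1 ⌊x⌋₊, unitaryRamanujanSum n r) / (x : ℂ)) atTop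
      (𝓝 (if r = 1 then (1 : ℂ) else 0)) := by
  have hr0 : r ≠ 0 := hr.ne'
  have hUeq : r.divisors.filter (fun d => Nat.Coprime d (r / d)) = U r := rfl
  have hA : ((∑ d ∈ r.divisors.filter (fun d => Nat.Coprime d (r / d)), d : ℕ) : ℝ)
      = ∑ d ∈ U r, (d : ℝ) := by
    rw [hUeq]; push_cast; rfl
  have part1 : ∀ x : ℝ, 1 ≤ x →
      ‖(∑ n ∈ Finset.Icc 1 ⌊x⌋₊, unitaryRamanujanSum n r) -
          (if r = 1 then (1 : ℂ) else 0) * (x : ℂ)‖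
        ≤ ((∑ d ∈ r.divisors.filter (fun d => Nat.Coprime d (r / d)), d : ℕ) : ℝ) := by
    intro x hx
    set N := ⌊x⌋₊ with hN
    have hNx : (N : ℝ) ≤ x := Nat.floor_le (by linarith)
    have hxN : x < N + 1 := Nat.lt_floor_add_one x
    rw [partial_sum_eq r N hr0, ← sum_mu (r := r) hr0, Finset.sum_mul, ← Finset.sum_sub_distrib]
    rw [hA, ← sum_U_div hr0]
    refine le_trans (norm_sum_le _ _) (Finset.sum_le_sum ?_)
    intro d hd
    rcases (mem_U hr0).1 hd with ⟨hdr, hco⟩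
    set m := r / d with hm
    have hm0 : 0 < m := Nat.div_pos (Nat.le_of_dvd hr hdr)
      (Nat.pos_of_ne_zero (fun h0 => hr0 (Nat.eq_zero_of_zero_dvd (h0 ▸ hdr))))
    have hterm : mu d * (m : ℂ) * ((N / m : ℕ) : ℂ) - mu d * x
        = mu d * (((m * (N / m) : ℕ) : ℝ) - x : ℝ) := by
      push_cast
      ring
    rw [hterm, norm_mul]
    have hmu : ‖mu d‖ = 1 := by
      rw [mu, norm_pow]
      simp
    rw [hmu, one_mul, Complex.norm_real, Real.norm_eq_abs]
    set t := m * (N / m) with ht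
    have h1 : (t : ℝ) ≤ x := by
      have : t ≤ N := by
        rw [ht, mul_comm]
        exact Nat.div_mul_le_self N m
      calc (t : ℝ) ≤ N := by exact_mod_cast this
      _ ≤ x := hNx
    have h2 : x ≤ t + m := by
      have hmod := Nat.div_add_mod N m
      have hlt : N % m < m := Nat.mod_lt N hm0
      have : N < t + m := by omega
      have : (N : ℝ) + 1 ≤ (t : ℝ) + m := by exact_mod_cast this
      linarith
    rw [abs_le]
    constructor <;> [linarith; linarith]
  refine ⟨part1, ?_⟩
  rw [← tendsto_sub_nhds_zero_iff]
  set A := ((∑ d ∈ r.divisors.filter (fun d => Nat.Coprime d (r / d)), d : ℕ) : ℝ) with hA'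
  apply squeeze_zero_norm' (a := fun x : ℝ => A / x)
  · filter_upwards [eventually_ge_atTop (1 : ℝ)] with x hx
    have hx0 : (0 : ℝ) < x := by linarith
    have hxC : (x : ℂ) ≠ 0 := by exact_mod_cast hx0.ne'
    have heq : (∑ n ∈ Finset.Icc 1 ⌊x⌋₊, unitaryRamanujanSum n r) / (x : ℂ) -
        (if r = 1 then (1 : ℂ) else 0)
        = ((∑ n ∈ Finset.Icc 1 ⌊x⌋₊, unitaryRamanujanSum n r) -
            (if r = 1 then (1 : ℂ) else 0) * (x : ℂ)) / (x : ℂ) := by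
      field_simp
    rw [heq, norm_div]
    have hnx : ‖(x : ℂ)‖ = x := by
      rw [Complex.norm_real, Real.norm_eq_abs, abs_of_pos hx0]
    rw [hnx]
    have hnum := part1 x hx
    gcongr
  · have := tendsto_inv_atTop_zero (𝕜 := ℝ)
    simpa [div_eq_mul_inv] using this.const_mul A
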